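/- Let t : G ⟶ R be a natural transformation between endofunctors of a category A such that every component t_a is a monomorphism, assume that R preserves equalisers, that A admits pushouts, and that G preserves pushouts. Then G preserves equalisers if and only if G preserves regular monomorphisms (i.e. G sends every regular monomorphism to a regular monomorphism). -/

import Mathlib

open CategoryTheory CategoryTheory.Limits

/-- A regular monomorphism is the equalizer of its cokernel pair. -/
noncomputable def regularMonoIsEqualizerOfCokernelPair {C : Type*} [Category C]
    {a b c : C} (g : a ⟶ b) (hg : RegularMono g) {j1 j2 : b ⟶ c} (hcomm : g ≫ j1 = g ≫ j2)
    (hp : IsColimit (PushoutCocone.mk j1 j2 hcomm)) :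
    IsLimit (Fork.ofι g hcomm) := by
  apply Fork.IsLimit.mk' _ _
  intro s
  obtain ⟨u, hu1, hu2⟩ := PushoutCocone.IsColimit.desc' hp
    (hg.left : b ⟶ hg.Z) hg.right hg.w
  have hs : s.ι ≫ (hg.left : b ⟶ hg.Z) = s.ι ≫ hg.right := by
    rw [← hu1, ← hu2]
    simp only [PushoutCocone.mk_inl, PushoutCocone.mk_inr] at *
    exact (Category.assoc _ _ _).symm.trans ((s.condition =≫ u).trans (Category.assoc _ _ _))
  obtain ⟨l, hl⟩ := hg.lift' s.ι hs
  exact ⟨l, hl, fun {m} hm => by rw [← @cancel_mono _ _ _ _ _ g hg.mono, hl]; exact hm⟩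

/-- **Proposition 2.3 (a)⇔(c).** Let `t : G ⟶ R` be a natural transformation between
endofunctors of `A` whose components are all monomorphisms, assume `R` preserves
equalisers, `A` admits pushouts and `G` preserves pushouts.  Then `G` preserves
equalisers if and only if `G` takes every regular monomorphism to a regular
monomorphism. -/
theorem prop_2_3_ac {A : Type*} [Category A] {G R : A ⥤ A} (t : G ⟶ R)
    [∀ a : A, Mono (t.app a)]
    [PreservesLimitsOfShape WalkingParallelPair R]
    [HasPushouts A]
    [PreservesColimitsOfShape WalkingSpan G] :
    PreservesLimitsOfShape WalkingParallelPair G ↔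
      ∀ {a₀ a : A} (i : a₀ ⟶ a), RegularMono i → Nonempty (RegularMono (G.map i)) := by
  constructor
  · intro h a₀ a i hi
    exact ⟨{
      Z := G.obj hi.Z
      left := G.map hi.left
      right := G.map hi.right
      w := by rw [← G.map_comp, ← G.map_comp, hi.w]
      isLimit := isLimitForkMapOfIsLimit G hi.w hi.isLimit }⟩
  · intro H
    -- it suffices to preserve each parallel pair
    have key : ∀ {X Y : A} (f g : X ⟶ Y), PreservesLimit (parallelPair f g) G := by
      intro X Y f g
      constructor
      intro c hc
      -- replace `c` by a fork
      have hc' : IsLimit (Fork.ofι (Fork.ι c) (Fork.condition c)) :=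
        IsLimit.ofIsoLimit hc (Fork.isoForkOfι c)
      -- `c.ι` is a regular mono
      haveI : RegularMono (Fork.ι c) := ⟨Y, f, g, Fork.condition c, hc'⟩
      -- `G.map c.ι` is a regular mono
      haveI : RegularMono (G.map (Fork.ι c)) := (H (Fork.ι c) this).some
      -- the cokernel pair of `c.ι`
      set e : c.pt ⟶ X := Fork.ι c with he
      have hcp : e ≫ (pushout.inl e e : X ⟶ pushout e e) = e ≫ pushout.inr e e :=
        pushout.condition
      have hGcp : G.map e ≫ G.map (pushout.inl e e) = G.map e ≫ G.map (pushout.inr e e) := by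
        rw [← G.map_comp, ← G.map_comp, hcp]
      -- `G` preserves this pushout
      have hGpo : IsColimit (PushoutCocone.mk (G.map (pushout.inl e e))
          (G.map (pushout.inr e e)) hGcp) :=
        isColimitPushoutCoconeMapOfIsColimit G _ (pushoutIsPushout e e)
      -- hence `G.map e` is the equalizer of its cokernel pair
      have hGe : IsLimit (Fork.ofι (G.map e) hGcp) :=
        regularMonoIsEqualizerOfCokernelPair (G.map e) this hGcp hGpo
      -- now show `G.mapCone c` is a limit
      refine ⟨(isLimitMapConeForkEquiv G (Fork.condition c)).symm ?_ |>.ofIsoLimit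
        ((Cones.functoriality _ G).mapIso (Fork.isoForkOfι c).symm)⟩
      -- the mapped fork of `(f, g)`
      apply Fork.IsLimit.mk' _ _
      intro s
      -- `s.ι` equalizes `G.map (pushout.inl)` and `G.map (pushout.inr)`
      have hR : (s.ι ≫ t.app X) ≫ R.map f = (s.ι ≫ t.app X) ≫ R.map g := by
        rw [Category.assoc, Category.assoc, ← t.naturality, ← t.naturality,
          ← Category.assoc, ← Category.assoc, s.condition]
      have hRe : e ≫ f = e ≫ g := Fork.condition c
      have hRlim : IsLimit (Fork.ofι (R.map e)
          (by rw [← R.map_comp, ← R.map_comp, hRe] : R.map e ≫ R.map f = R.map e ≫ R.map g)) :=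
        isLimitForkMapOfIsLimit R hRe hc'
      obtain ⟨k, hk⟩ := Fork.IsLimit.lift' hRlim (s.ι ≫ t.app X) hR
      simp only [Fork.ι_ofι] at hk
      have hk' : s.ι ≫ t.app ((parallelPair f g).obj WalkingParallelPair.zero) = k ≫ R.map e :=
        hk.symm
      have heq : s.ι ≫ G.map (pushout.inl e e) = s.ι ≫ G.map (pushout.inr e e) := by
        rw [← cancel_mono (t.app (pushout e e))]
        rw [Category.assoc, Category.assoc, t.naturality, t.naturality,
          ← Category.assoc, ← Category.assoc, ← hk, Category.assoc, Category.assoc]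
        simp only [← R.map_comp]
        rw [hcp]
      obtain ⟨l, hl⟩ := Fork.IsLimit.lift' hGe s.ι heq
      exact ⟨l, hl, fun {m} hm => by
        simp only [Fork.ι_ofι] at hl hm
        rw [← @cancel_mono _ _ _ _ _ (G.map e) this.mono, hl]; exact hm⟩
    constructor
    intro K
    exact preservesLimit_of_iso_diagram G (diagramIsoParallelPair K).symm
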